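/- Let d, p be reals with 1 < p < d. The function u(x) := (1 + |x|^{p/(p-1)})^{(p-d)/p} is a positive supersolution of -Δ_p u = 0 on ℝ^d, i.e., its radial profile v(r) = (1 + r^{p/(p-1)})^{(p-d)/p} satisfies -(|v'|^{p-2}v')' - ((d-1)/r)|v'|^{p-2}v' ≥ 0 for all r > 0. -/

import Mathlib

open Real

theorem stmt_10 (d p : ℝ) (hp₁ : 1 < p) (hp₂ : p < d)
    (v : ℝ → ℝ) (hv : ∀ r : ℝ, v r = (1 + r ^ (p / (p - 1))) ^ ((p - d) / p)) :
    ∀ r : ℝ, 0 < r →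
      0 < v r ∧
      0 ≤ -(deriv (fun s => |deriv v s| ^ (p - 2) * deriv v s) r) -
          ((d - 1) / r) * (|deriv v r| ^ (p - 2) * deriv v r) := by
  have hp0 : 0 < p := by linarith
  have hp1' : 0 < p - 1 := by linarith
  obtain ⟨q, hq⟩ : ∃ q : ℝ, q = p / (p - 1) := ⟨_, rfl⟩
  obtain ⟨α, hα⟩ : ∃ α : ℝ, α = (p - d) / p := ⟨_, rfl⟩
  obtain ⟨A, hA⟩ : ∃ A : ℝ, A = (d - p) / (p - 1) := ⟨_, rfl⟩
  obtain ⟨β, hβ⟩ : ∃ β : ℝ, β = (α - 1) * (p - 1) := ⟨_, rfl⟩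
  have hv' : ∀ r : ℝ, v r = (1 + r ^ q) ^ α := by
    intro r; rw [hq, hα]; exact hv r
  have hq1 : 1 < q := by
    rw [hq]; exact (one_lt_div hp1').mpr (by linarith)
  have hα0 : α < 0 := by rw [hα]; exact div_neg_of_neg_of_pos (by linarith) hp0
  have hA0 : 0 < A := by rw [hA]; exact div_pos (by linarith) hp1'
  have hAαq : α * q = -A := by
    rw [hA, hα, hq]; field_simp; ring
  have hβq : β * q = -d := by
    rw [hβ, hα, hq]; field_simp; ring
  have hqp : (q - 1) * (p - 1) = 1 := by rw [hq]; field_simp; ring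
  have hbase : ∀ s : ℝ, 0 < s → 0 < 1 + s ^ q := by
    intro s hs
    have : 0 < s ^ q := rpow_pos_of_pos hs q
    linarith
  -- derivative of v on (0, ∞)
  have hdv : ∀ s : ℝ, 0 < s →
      HasDerivAt v (-(A * (s ^ (q - 1) * (1 + s ^ q) ^ (α - 1)))) s := by
    intro s hs
    have hvf : v = fun s : ℝ => (1 + s ^ q) ^ α := funext hv'
    have hin : HasDerivAt (fun s : ℝ => 1 + s ^ q) (q * s ^ (q - 1)) s := by
      simpa using (Real.hasDerivAt_rpow_const (x := s) (p := q) (Or.inl hs.ne')).const_add 1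
    have h2 := HasDerivAt.rpow_const (p := α) hin (Or.inl (hbase s hs).ne')
    rw [hvf]
    convert h2 using 1
    linear_combination (-(s ^ (q - 1) * (1 + s ^ q) ^ (α - 1))) * hAαq
  have hdv' : ∀ s : ℝ, 0 < s →
      deriv v s = -(A * (s ^ (q - 1) * (1 + s ^ q) ^ (α - 1))) := fun s hs => (hdv s hs).deriv
  have hDpos : ∀ s : ℝ, 0 < s → 0 < A * (s ^ (q - 1) * (1 + s ^ q) ^ (α - 1)) := by
    intro s hs
    have h1 : 0 < s ^ (q - 1) := rpow_pos_of_pos hs _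
    have h2 : 0 < (1 + s ^ q) ^ (α - 1) := rpow_pos_of_pos (hbase s hs) _
    positivity
  -- the flux function equals -(A^(p-1) * (s * (1+s^q)^β)) on (0,∞)
  have hw : ∀ s : ℝ, 0 < s →
      |deriv v s| ^ (p - 2) * deriv v s = -(A ^ (p - 1) * (s * (1 + s ^ q) ^ β)) := by
    intro s hs
    have hDp : 0 < A * (s ^ (q - 1) * (1 + s ^ q) ^ (α - 1)) := hDpos s hs
    rw [hdv' s hs, abs_neg, abs_of_pos hDp]
    have h1 : (A * (s ^ (q - 1) * (1 + s ^ q) ^ (α - 1))) ^ (p - 2)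
        * (A * (s ^ (q - 1) * (1 + s ^ q) ^ (α - 1)))
        = (A * (s ^ (q - 1) * (1 + s ^ q) ^ (α - 1))) ^ (p - 1) := by
      rw [show p - 1 = (p - 2) + 1 by ring, Real.rpow_add hDp, Real.rpow_one]
    have h2 : (A * (s ^ (q - 1) * (1 + s ^ q) ^ (α - 1))) ^ (p - 1)
        = A ^ (p - 1) * (s * (1 + s ^ q) ^ β) := by
      rw [Real.mul_rpow hA0.le (by positivity),
        Real.mul_rpow (rpow_pos_of_pos hs _).le (rpow_pos_of_pos (hbase s hs) _).le,
        ← Real.rpow_mul hs.le, hqp, Real.rpow_one,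
        ← Real.rpow_mul (hbase s hs).le, ← hβ]
    rw [mul_neg, h1, h2]
  intro r hr
  constructor
  · rw [hv' r]
    exact rpow_pos_of_pos (hbase r hr) _
  -- derivative of the flux at r
  have hEq : (fun s => |deriv v s| ^ (p - 2) * deriv v s)
      =ᶠ[nhds r] fun s => -(A ^ (p - 1) * (s * (1 + s ^ q) ^ β)) := by
    filter_upwards [IsOpen.mem_nhds isOpen_Ioi hr] with s hs
    exact hw s hs
  have hg : HasDerivAt (fun s : ℝ => -(A ^ (p - 1) * (s * (1 + s ^ q) ^ β)))
      (-(A ^ (p - 1) * (1 * ((1 + r ^ q) ^ β) + r * (q * r ^ (q - 1) * β * (1 + r ^ q) ^ (β - 1))))) r := by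
    have hin : HasDerivAt (fun s : ℝ => 1 + s ^ q) (q * r ^ (q - 1)) r := by
      simpa using (Real.hasDerivAt_rpow_const (x := r) (p := q) (Or.inl hr.ne')).const_add 1
    have hB := HasDerivAt.rpow_const (p := β) hin (Or.inl (hbase r hr).ne')
    exact (((hasDerivAt_id r).mul hB).const_mul (A ^ (p - 1))).neg
  have hderivEq : deriv (fun s => |deriv v s| ^ (p - 2) * deriv v s) r
      = -(A ^ (p - 1) * (1 * ((1 + r ^ q) ^ β) + r * (q * r ^ (q - 1) * β * (1 + r ^ q) ^ (β - 1)))) := by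
    rw [Filter.EventuallyEq.deriv_eq hEq]
    exact hg.deriv
  rw [hderivEq, hw r hr]
  -- algebraic simplification
  have E1 : (1 + r ^ q) ^ β = (1 + r ^ q) ^ (β - 1) * (1 + r ^ q) := by
    rw [← Real.rpow_add_one (hbase r hr).ne' (β - 1), sub_add_cancel]
  have E2 : r ^ (q - 1) = r ^ q / r := by
    rw [Real.rpow_sub hr, Real.rpow_one]
  have key : -(-(A ^ (p - 1) * (1 * ((1 + r ^ q) ^ β) + r * (q * r ^ (q - 1) * β * (1 + r ^ q) ^ (β - 1))))) -
      (d - 1) / r * -(A ^ (p - 1) * (r * (1 + r ^ q) ^ β)) = A ^ (p - 1) * (1 + r ^ q) ^ (β - 1) * d := by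
    rw [E1, E2]
    field_simp
    linear_combination r ^ q * hβq
  rw [key]
  have hXpos : 0 < (1 + r ^ q) ^ (β - 1) := rpow_pos_of_pos (hbase r hr) _
  have hAp : 0 < A ^ (p - 1) := rpow_pos_of_pos hA0 _
  exact le_of_lt (mul_pos (mul_pos hAp hXpos) (by linarith))
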